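/- Let (X, X) and (Y, Y) be continuous biframe Bessel mappings for H with Bessel bounds D₁ and D₂ respectively, and let m : Ω → ℂ be an essentially bounded measurable function. Then for every f ∈ H, ‖M_{m,X,Y} f‖ ≤ ‖m‖_∞·√D₂·‖∫_Ω ⟨f, X(ω)⟩⟨X(ω), f⟩ dμ(ω)‖^{1/2}. -/

import Mathlib

open MeasureTheory

section AuxStar
set_option linter.unusedSectionVars false

variable {𝒜 : Type*} [NormedRing 𝒜] [StarRing 𝒜] [CStarRing 𝒜] [NormedAlgebra ℂ 𝒜]
  [CompleteSpace 𝒜] [PartialOrder 𝒜] [StarOrderedRing 𝒜]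

lemma myStarRealSmul (r : ℝ) (a : 𝒜) : star (r • a) = r • star a :=
  map_real_smul (starAddEquiv : 𝒜 ≃+ 𝒜) continuous_star r a

lemma myStarI : star (Complex.I • (1:𝒜)) = -(Complex.I • (1:𝒜)) := by
  set u : 𝒜 := Complex.I • (1:𝒜) with hu
  have hu2 : u * u = -1 := by
    rw [hu, smul_mul_smul_comm, Complex.I_mul_I, one_mul, neg_smul, one_smul]
  have hs2 : star u * star u = -1 := by
    rw [← star_mul, hu2, star_neg, star_one]
  have hcomm : u * star u = star u * u := by
    rw [hu, smul_mul_assoc, one_mul, mul_smul_comm, mul_one]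
  have htsa : star (u * star u) = u * star u := by rw [star_mul, star_star, hcomm]
  have ht2 : (u * star u) * (u * star u) = 1 := by
    calc u * star u * (u * star u) = u * (star u * u) * star u := by noncomm_ring
    _ = u * (u * star u) * star u := by rw [hcomm]
    _ = (u * u) * (star u * star u) := by noncomm_ring
    _ = 1 := by rw [hu2, hs2]; simp
  have hp : (0:𝒜) ≤ u * star u + u * star u - 1 - 1 := by
    have h0 : (0:𝒜) ≤ star (u + star u) * (u + star u) := star_mul_self_nonneg _
    have heq : star (u + star u) * (u + star u) = u * star u + u * star u - 1 - 1 := by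
      rw [star_add, star_star]
      calc (star u + u) * (u + star u)
          = star u * u + star u * star u + (u * u + u * star u) := by noncomm_ring
        _ = u * star u + -1 + (-1 + u * star u) := by rw [hs2, hu2, hcomm]
        _ = u * star u + u * star u - 1 - 1 := by noncomm_ring
    rwa [heq] at h0
  have ha : u * star u - 1 = 0 := by
    have hsq : (u * star u - 1) * (u * star u - 1)
        = -(u * star u + u * star u - 1 - 1) := by
      have e : (u * star u - 1) * (u * star u - 1)
          = (u * star u) * (u * star u) - u * star u - u * star u + 1 := by noncomm_ring
      rw [e, ht2]; noncomm_ring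
    have h1 : (0:𝒜) ≤ (u * star u - 1) * (u * star u - 1) := by
      have := star_mul_self_nonneg (u * star u - 1)
      rwa [show star (u * star u - 1) = u * star u - 1 by rw [star_sub, htsa, star_one]] at this
    have h2 : (u * star u - 1) * (u * star u - 1) ≤ 0 := by
      rw [hsq]; exact neg_nonpos.mpr hp
    have h3 : (u * star u - 1) * (u * star u - 1) = 0 := le_antisymm h2 h1
    have h4 : ‖u * star u - 1‖ * ‖u * star u - 1‖ = 0 := by
      rw [← CStarRing.norm_star_mul_self (x := u * star u - 1),
        show star (u * star u - 1) = u * star u - 1 by rw [star_sub, htsa, star_one], h3,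
        norm_zero]
    exact norm_eq_zero.mp (mul_self_eq_zero.mp h4)
  have htone : u * star u = 1 := sub_eq_zero.mp ha
  have hneg : (-u) * u = 1 := by rw [neg_mul, hu2, neg_neg]
  calc star u = ((-u) * u) * star u := by rw [hneg, one_mul]
    _ = (-u) * (u * star u) := by noncomm_ring
    _ = -u := by rw [htone, mul_one]

lemma myDecomp (z : ℂ) (a : 𝒜) : z • a = z.re • a + z.im • (Complex.I • a) := by
  nth_rewrite 1 [← Complex.re_add_im z]
  rw [add_smul, mul_smul]
  rw [show ((z.re : ℂ)) = algebraMap ℝ ℂ z.re from rfl,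
    show ((z.im : ℂ)) = algebraMap ℝ ℂ z.im from rfl,
    algebraMap_smul, algebraMap_smul]

lemma myStarISmul (a : 𝒜) : star (Complex.I • a) = -(Complex.I • star a) := by
  have h1 : Complex.I • a = (Complex.I • (1:𝒜)) * a := by
    rw [smul_mul_assoc, one_mul]
  rw [h1, star_mul, myStarI, mul_neg, mul_smul_comm, mul_one]

lemma myStarModule : StarModule ℂ 𝒜 := by
  constructor
  intro z a
  rw [show (star z : ℂ) = starRingEnd ℂ z from rfl, myDecomp z a,
    myDecomp (starRingEnd ℂ z) (star a)]
  rw [star_add, myStarRealSmul, myStarRealSmul, myStarISmul, Complex.conj_re, Complex.conj_im,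
    smul_neg, neg_smul]

@[reducible] noncomputable def myCStarAlgebra : CStarAlgebra 𝒜 :=
  letI := (myStarModule : StarModule ℂ 𝒜)
  { }

end AuxStar

section AuxOrder
set_option linter.unusedSectionVars false

variable {𝒜 : Type*} [CStarAlgebra 𝒜] [PartialOrder 𝒜] [StarOrderedRing 𝒜]
  {Ω : Type*} [MeasurableSpace Ω] {μ : Measure Ω}

lemma myConvexCone : Convex ℝ {a : 𝒜 | 0 ≤ a} := fun _ hx _ hy _ _ ha hb _ =>
  add_nonneg (smul_nonneg ha hx) (smul_nonneg hb hy)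

lemma myIntegralNonneg {h : Ω → 𝒜} (hint : Integrable h μ) (hpos : ∀ᵐ ω ∂μ, 0 ≤ h ω) :
    0 ≤ ∫ ω, h ω ∂μ := by
  by_contra hc
  have hnot : (∫ ω, h ω ∂μ) ∉ {a : 𝒜 | 0 ≤ a} := hc
  obtain ⟨f, u, hfu, huf⟩ := geometric_hahn_banach_closed_point
    myConvexCone CStarAlgebra.isClosed_nonneg hnot
  have hu0 : 0 < u := by simpa using hfu 0 le_rfl
  have hfle : ∀ a : 𝒜, 0 ≤ a → f a ≤ 0 := by
    intro a ha
    by_contra hfa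
    push_neg at hfa
    have hn : ∀ n : ℕ, (n : ℝ) * f a < u := by
      intro n
      have := hfu ((n : ℝ) • a) (smul_nonneg (by positivity) ha)
      simpa [_root_.map_smul] using this
    obtain ⟨n, hn'⟩ := exists_nat_gt (u / f a)
    exact absurd (hn n) (not_lt.mpr ((div_lt_iff₀ hfa).mp hn').le)
  have key : f (∫ ω, h ω ∂μ) ≤ 0 := by
    rw [← ContinuousLinearMap.integral_comp_comm f hint]
    have hae : ∀ᵐ ω ∂μ, f (h ω) ≤ 0 := hpos.mono fun ω hω => hfle _ hω
    have hfint : Integrable (fun ω => f (h ω)) μ := f.integrable_comp hint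
    calc (∫ ω, f (h ω) ∂μ) ≤ ∫ ω, (0:ℝ) ∂μ := integral_mono_ae hfint (integrable_zero _ _ _) hae
      _ = 0 := by simp
  exact absurd key (not_le.mpr (hu0.trans huf))

lemma myIntegralMono {h g : Ω → 𝒜} (hint : Integrable h μ) (gint : Integrable g μ)
    (hle : ∀ᵐ ω ∂μ, h ω ≤ g ω) : (∫ ω, h ω ∂μ) ≤ ∫ ω, g ω ∂μ := by
  have := myIntegralNonneg (gint.sub hint) (hle.mono fun ω hω => sub_nonneg.mpr hω)
  simp only [Pi.sub_apply] at this
  rw [integral_sub gint hint] at this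
  exact sub_nonneg.mp this

lemma myIntegralStar {h : Ω → 𝒜} (hint : Integrable h μ) :
    (∫ ω, star (h ω) ∂μ) = star (∫ ω, h ω ∂μ) :=
  ((starL' ℝ : 𝒜 ≃L[ℝ] 𝒜).toContinuousLinearMap.integral_comp_comm hint)

lemma myOneNonneg : (0:𝒜) ≤ 1 := by simpa using star_mul_self_nonneg (1:𝒜)

lemma myAlgebraMapLe {s t : ℝ} (h : s ≤ t) :
    algebraMap ℝ 𝒜 s ≤ algebraMap ℝ 𝒜 t := by
  have heq : algebraMap ℝ 𝒜 t - algebraMap ℝ 𝒜 s = (t - s) • (1:𝒜) := by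
    rw [← map_sub, Algebra.algebraMap_eq_smul_one]
  have h2 : (0:𝒜) ≤ (t - s) • (1:𝒜) := smul_nonneg (sub_nonneg.mpr h) myOneNonneg
  rw [← heq] at h2
  exact sub_nonneg.mp h2

/-- C*-valued Cauchy–Schwarz inequality for integrals. -/
lemma myCS {a b : Ω → 𝒜}
    (hab : Integrable (fun ω => a ω * star (b ω)) μ)
    (haa : Integrable (fun ω => a ω * star (a ω)) μ)
    (hbb : Integrable (fun ω => b ω * star (b ω)) μ) :
    ‖∫ ω, a ω * star (b ω) ∂μ‖ ^ 2
      ≤ ‖∫ ω, a ω * star (a ω) ∂μ‖ * ‖∫ ω, b ω * star (b ω) ∂μ‖ := by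
  set c : 𝒜 := ∫ ω, a ω * star (b ω) ∂μ with hc
  set A : 𝒜 := ∫ ω, a ω * star (a ω) ∂μ with hA
  set B : 𝒜 := ∫ ω, b ω * star (b ω) ∂μ with hB
  have hAnn : 0 ≤ A := myIntegralNonneg haa (.of_forall fun ω => mul_star_self_nonneg _)
  have hBnn : 0 ≤ B := myIntegralNonneg hbb (.of_forall fun ω => mul_star_self_nonneg _)
  have hBsa : IsSelfAdjoint B := hBnn.isSelfAdjoint
  have hba : Integrable (fun ω => b ω * star (a ω)) μ := by
    have := ((starL' ℝ : 𝒜 ≃L[ℝ] 𝒜).toContinuousLinearMap).integrable_comp hab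
    refine this.congr (.of_forall fun ω => ?_)
    show star (a ω * star (b ω)) = _
    rw [star_mul, star_star]
  have hbaeq : (∫ ω, b ω * star (a ω) ∂μ) = star c := by
    rw [hc, ← myIntegralStar hab]
    exact integral_congr_ae (.of_forall fun ω => by simp [star_mul])
  have h2 : Integrable (fun ω => a ω * star (b ω) * star c) μ :=
    ((ContinuousLinearMap.mul ℝ 𝒜).flip (star c)).integrable_comp hab
  have h3 : Integrable (fun ω => c * (b ω * star (a ω))) μ :=
    (ContinuousLinearMap.mul ℝ 𝒜 c).integrable_comp hba
  have h4 : Integrable (fun ω => c * (b ω * star (b ω)) * star c) μ :=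
    ((ContinuousLinearMap.mul ℝ 𝒜).flip (star c)).integrable_comp
      ((ContinuousLinearMap.mul ℝ 𝒜 c).integrable_comp hbb)
  have e2 : (∫ ω, a ω * star (b ω) * star c ∂μ) = c * star c :=
    (((ContinuousLinearMap.mul ℝ 𝒜).flip (star c)).integral_comp_comm hab :
      (∫ ω, a ω * star (b ω) * star c ∂μ) = (∫ ω, a ω * star (b ω) ∂μ) * star c)
  have e3 : (∫ ω, c * (b ω * star (a ω)) ∂μ) = c * star c := by
    have i1 : (∫ ω, c * (b ω * star (a ω)) ∂μ) = c * ∫ ω, b ω * star (a ω) ∂μ :=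
      (ContinuousLinearMap.mul ℝ 𝒜 c).integral_comp_comm hba
    rw [i1, hbaeq]
  have e4 : (∫ ω, c * (b ω * star (b ω)) * star c ∂μ) = c * B * star c := by
    have i1 : (∫ ω, c * (b ω * star (b ω)) ∂μ) = c * B :=
      (ContinuousLinearMap.mul ℝ 𝒜 c).integral_comp_comm hbb
    have i2 : (∫ ω, c * (b ω * star (b ω)) * star c ∂μ)
        = (∫ ω, c * (b ω * star (b ω)) ∂μ) * star c :=
      ((ContinuousLinearMap.mul ℝ 𝒜).flip (star c)).integral_comp_comm
        ((ContinuousLinearMap.mul ℝ 𝒜 c).integrable_comp hbb)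
    rw [i2, i1]
  have key : ∀ ε : ℝ, 0 < ε → ‖c‖ ^ 2 ≤ (‖B‖ + ε) * ‖A‖ := by
    intro ε hε
    set t : ℝ := ‖B‖ + ε with ht
    have htpos : 0 < t := by positivity
    set E : Ω → 𝒜 := fun ω => (t * t) • (a ω * star (a ω))
      - t • (a ω * star (b ω) * star c) - t • (c * (b ω * star (a ω)))
      + c * (b ω * star (b ω)) * star c with hE
    have hI2 : Integrable (fun ω => (t*t) • (a ω * star (a ω))) μ := haa.smul (t*t)
    have hI5 : Integrable (fun ω => t • (a ω * star (b ω) * star c)) μ := h2.smul t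
    have hI6 : Integrable (fun ω => t • (c * (b ω * star (a ω)))) μ := h3.smul t
    have hI0 : Integrable (fun ω => (t*t) • (a ω * star (a ω))
        - t • (a ω * star (b ω) * star c)) μ := hI2.sub hI5
    have hI1 : Integrable (fun ω => (t*t) • (a ω * star (a ω))
        - t • (a ω * star (b ω) * star c) - t • (c * (b ω * star (a ω)))) μ := hI0.sub hI6
    have hEint : Integrable E μ := hI1.add h4
    have hEpos : ∀ ω, 0 ≤ E ω := by
      intro ω
      have hid : (t • a ω - c * b ω) * star (t • a ω - c * b ω) = E ω := by
        rw [star_sub, star_smul, star_trivial, star_mul, sub_mul, mul_sub, mul_sub,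
          smul_mul_smul_comm, smul_mul_assoc, mul_smul_comm, hE]
        simp only [mul_assoc]
        abel
      rw [← hid]
      exact mul_star_self_nonneg _
    have hEI : (∫ ω, E ω ∂μ) = (t * t) • A - t • (c * star c) - t • (c * star c)
        + c * B * star c := by
      show (∫ ω, ((t * t) • (a ω * star (a ω))
        - t • (a ω * star (b ω) * star c) - t • (c * (b ω * star (a ω)))
        + c * (b ω * star (b ω)) * star c) ∂μ) = _
      rw [integral_add hI1 h4, integral_sub hI0 hI6, integral_sub hI2 hI5,
        integral_smul, integral_smul, integral_smul, e2, e3, e4, hA]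
    have hIpos : (0:𝒜) ≤ (t * t) • A - t • (c * star c) - t • (c * star c)
        + c * B * star c := by
      rw [← hEI]
      exact myIntegralNonneg hEint (.of_forall hEpos)
    have hconj : c * B * star c ≤ t • (c * star c) := by
      have hBle : B ≤ algebraMap ℝ 𝒜 t := by
        refine le_trans hBsa.le_algebraMap_norm_self (myAlgebraMapLe ?_)
        linarith
      calc c * B * star c ≤ c * algebraMap ℝ 𝒜 t * star c := star_right_conjugate_le_conjugate hBle c
        _ = t • (c * star c) := by
          rw [Algebra.algebraMap_eq_smul_one, mul_smul_comm, mul_one, smul_mul_assoc]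
    have hfin : t • (c * star c) ≤ (t * t) • A := by
      have h5 : (0:𝒜) ≤ (t*t) • A - t • (c * star c) - t • (c * star c) + t • (c * star c) :=
        le_trans hIpos
          (add_le_add_right hconj ((t*t) • A - t • (c * star c) - t • (c * star c)))
      have h6 : (0:𝒜) ≤ (t*t) • A - t • (c * star c) := by
        rwa [sub_add_cancel] at h5
      exact sub_nonneg.mp h6
    have hfin2 : c * star c ≤ t • A := by
      rw [mul_smul] at hfin
      exact (smul_le_smul_iff_of_pos_left htpos).mp hfin
    have hnorm : ‖c * star c‖ ≤ ‖t • A‖ :=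
      CStarAlgebra.norm_le_norm_of_nonneg_of_le (mul_star_self_nonneg c) hfin2
    rw [norm_smul, Real.norm_eq_abs, abs_of_pos htpos] at hnorm
    rw [pow_two, ← CStarRing.norm_self_mul_star]
    exact hnorm
  by_contra hlt
  push_neg at hlt
  rcases eq_or_lt_of_le (norm_nonneg A) with hA0 | hA0
  · have h1 := key 1 one_pos
    rw [← hA0] at h1 hlt
    simp only [mul_zero, zero_mul] at h1 hlt
    exact absurd h1 (not_le.mpr hlt)
  · have hδpos : 0 < ‖c‖^2 - ‖A‖ * ‖B‖ := by linarith
    have hε : 0 < (‖c‖^2 - ‖A‖ * ‖B‖) / (2 * ‖A‖) := by positivity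
    have hkey := key _ hε
    have hexp : (‖B‖ + (‖c‖^2 - ‖A‖ * ‖B‖) / (2 * ‖A‖)) * ‖A‖
        = ‖B‖ * ‖A‖ + (‖c‖^2 - ‖A‖ * ‖B‖) / 2 := by
      field_simp
    rw [hexp] at hkey
    nlinarith [hkey]

end AuxOrder

/-- For every `f`,
`‖M_{m,X,Y} f‖ ≤ ‖m‖_∞ · √D₂ · ‖∫ ⟨f, X ω⟩⟨X ω, f⟩ dμ‖^{1/2}`. -/
theorem bessel_multiplier_pointwise_bound
    {𝒜 H Ω : Type*}
    -- `𝒜` is a unital C*-algebra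
    [NormedRing 𝒜] [StarRing 𝒜] [CStarRing 𝒜] [NormedAlgebra ℂ 𝒜] [CompleteSpace 𝒜]
    [PartialOrder 𝒜] [StarOrderedRing 𝒜]
    -- `H` is a Hilbert C*-module over `𝒜`
    [NormedAddCommGroup H] [NormedSpace ℝ H] [CompleteSpace H] [Module 𝒜 H]
    (inn : H → H → 𝒜)
    (inn_add_left : ∀ x y z : H, inn (x + y) z = inn x z + inn y z)
    (inn_smul_left : ∀ (a : 𝒜) (x z : H), inn (a • x) z = a * inn x z)
    (inn_conj_symm : ∀ x y : H, inn x y = star (inn y x))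
    (inn_nonneg : ∀ x : H, 0 ≤ inn x x)
    (inn_definite : ∀ x : H, inn x x = 0 → x = 0)
    (hnorm : ∀ x : H, ‖x‖ = Real.sqrt ‖inn x x‖)
    -- `(Ω, μ)` is a measure space
    [MeasurableSpace Ω] (μ : Measure Ω)
    -- `X, Y : Ω → H` are weakly measurable
    (X Y : Ω → H)
    (hXw : ∀ f : H, AEStronglyMeasurable (fun ω => inn f (X ω)) μ)
    (hYw : ∀ f : H, AEStronglyMeasurable (fun ω => inn f (Y ω)) μ)
    -- `(X, X)` and `(Y, Y)` are continuous biframe Bessel mappings with bounds `D₁, D₂`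
    (D₁ D₂ : ℝ) (hD₁ : 0 < D₁) (hD₂ : 0 < D₂)
    (hXBessel : ∀ f : H, ∫ ω, inn f (X ω) * inn (X ω) f ∂μ ≤ D₁ • inn f f)
    (hYBessel : ∀ f : H, ∫ ω, inn f (Y ω) * inn (Y ω) f ∂μ ≤ D₂ • inn f f)
    -- `m : Ω → ℂ` is an essentially bounded measurable function
    (m : Ω → ℂ) (hm : AEStronglyMeasurable m μ) (hmbd : eLpNormEssSup m μ ≠ ⊤)
    -- all relevant integrands are Bochner integrable
    (hprodX : ∀ f : H, Integrable (fun ω => inn f (X ω) * inn (X ω) f) μ)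
    (hprodY : ∀ f : H, Integrable (fun ω => inn f (Y ω) * inn (Y ω) f) μ)
    (hmint : ∀ f g : H, Integrable (fun ω => m ω • (inn f (X ω) * inn (Y ω) g)) μ)
    -- the continuous biframe Bessel multiplier `M_{m,X,Y}` (weakly defined)
    (M : H → H)
    (hM : ∀ f g : H, inn (M f) g = ∫ ω, m ω • (inn f (X ω) * inn (Y ω) g) ∂μ) :
    ∀ f : H, ‖M f‖ ≤ (eLpNormEssSup m μ).toReal * Real.sqrt D₂ *
      Real.sqrt ‖∫ ω, inn f (X ω) * inn (X ω) f ∂μ‖ := by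
  letI : StarModule ℂ 𝒜 := myStarModule
  letI : CStarAlgebra 𝒜 := myCStarAlgebra
  intro f
  set K : ℝ := (eLpNormEssSup m μ).toReal with hKdef
  have hK0 : 0 ≤ K := ENNReal.toReal_nonneg
  have hKae : ∀ᵐ ω ∂μ, ‖m ω‖ ≤ K := by
    refine (ae_le_eLpNormEssSup (f := m) (μ := μ)).mono fun ω hω => ?_
    have := ENNReal.toReal_mono hmbd hω
    simpa using this
  have hstar : ∀ x y : H, star (inn x y) = inn y x := fun x y => by
    rw [inn_conj_symm y x]
  -- the two functions entering Cauchy–Schwarz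
  -- a ω = m ω • inn f (X ω),  b ω = inn (M f) (Y ω)
  have hab : Integrable (fun ω => (m ω • inn f (X ω)) * star (inn (M f) (Y ω))) μ := by
    refine (hmint f (M f)).congr (.of_forall fun ω => ?_)
    simp only [hstar, smul_mul_assoc]
  have hcc : inn (M f) (M f) = ∫ ω, (m ω • inn f (X ω)) * star (inn (M f) (Y ω)) ∂μ := by
    rw [hM f (M f)]
    exact integral_congr_ae (.of_forall fun ω => by simp only [hstar, smul_mul_assoc])
  have haaeq : ∀ ω, (m ω • inn f (X ω)) * star (m ω • inn f (X ω))
      = (‖m ω‖^2) • (inn f (X ω) * inn (X ω) f) := by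
    intro ω
    rw [star_smul, smul_mul_smul_comm, hstar]
    have hmc : m ω * star (m ω) = ((‖m ω‖^2 : ℝ) : ℂ) := by
      rw [show (star (m ω) : ℂ) = starRingEnd ℂ (m ω) from rfl, Complex.mul_conj]
      norm_cast
      rw [Complex.normSq_eq_norm_sq]
    rw [hmc, show ((‖m ω‖^2 : ℝ) : ℂ) = algebraMap ℝ ℂ (‖m ω‖^2) from rfl, algebraMap_smul]
  have haaAESM : AEStronglyMeasurable
      (fun ω => (m ω • inn f (X ω)) * star (m ω • inn f (X ω))) μ :=
    (hm.smul (hXw f)).mul (continuous_star.comp_aestronglyMeasurable (hm.smul (hXw f)))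
  have haa : Integrable (fun ω => (m ω • inn f (X ω)) * star (m ω • inn f (X ω))) μ := by
    refine Integrable.mono' (((hprodX f).norm.const_mul (K*K))) haaAESM ?_
    refine hKae.mono fun ω hω => ?_
    rw [haaeq ω, norm_smul, Real.norm_eq_abs, abs_of_nonneg (by positivity)]
    have : ‖m ω‖^2 ≤ K * K := by nlinarith [norm_nonneg (m ω)]
    have hn : (0:ℝ) ≤ ‖inn f (X ω) * inn (X ω) f‖ := norm_nonneg _
    nlinarith
  have hbb : Integrable (fun ω => inn (M f) (Y ω) * star (inn (M f) (Y ω))) μ := by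
    refine (hprodY (M f)).congr (.of_forall fun ω => ?_)
    simp only [hstar]
  -- Cauchy–Schwarz
  have hCS := myCS (a := fun ω => m ω • inn f (X ω)) (b := fun ω => inn (M f) (Y ω))
    hab haa hbb
  rw [← hcc] at hCS
  -- bound the `S` factor using the Bessel property of `Y`
  have hSle : (∫ ω, inn (M f) (Y ω) * star (inn (M f) (Y ω)) ∂μ) ≤ D₂ • inn (M f) (M f) := by
    have : (∫ ω, inn (M f) (Y ω) * star (inn (M f) (Y ω)) ∂μ)
        = ∫ ω, inn (M f) (Y ω) * inn (Y ω) (M f) ∂μ :=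
      integral_congr_ae (.of_forall fun ω => by simp only [hstar])
    rw [this]
    exact hYBessel (M f)
  have hSnn : 0 ≤ ∫ ω, inn (M f) (Y ω) * star (inn (M f) (Y ω)) ∂μ :=
    myIntegralNonneg hbb (.of_forall fun ω => mul_star_self_nonneg _)
  have hSnorm : ‖∫ ω, inn (M f) (Y ω) * star (inn (M f) (Y ω)) ∂μ‖
      ≤ D₂ * ‖inn (M f) (M f)‖ := by
    have := CStarAlgebra.norm_le_norm_of_nonneg_of_le hSnn hSle
    rwa [norm_smul, Real.norm_eq_abs, abs_of_pos hD₂] at this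
  -- bound the `T` factor using the essential bound of `m`
  have hTle : (∫ ω, (m ω • inn f (X ω)) * star (m ω • inn f (X ω)) ∂μ)
      ≤ (K*K) • ∫ ω, inn f (X ω) * inn (X ω) f ∂μ := by
    rw [← integral_smul]
    refine myIntegralMono haa ((hprodX f).smul (K*K)) ?_
    refine hKae.mono fun ω hω => ?_
    rw [haaeq ω]
    have hp : 0 ≤ inn f (X ω) * inn (X ω) f := by
      rw [← hstar f (X ω)]
      exact mul_star_self_nonneg _
    have hms : ‖m ω‖^2 ≤ K * K := by nlinarith [norm_nonneg (m ω)]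
    have := smul_nonneg (sub_nonneg.mpr hms) hp
    rw [sub_smul] at this
    exact sub_nonneg.mp this
  have hTnn : 0 ≤ ∫ ω, (m ω • inn f (X ω)) * star (m ω • inn f (X ω)) ∂μ :=
    myIntegralNonneg haa (.of_forall fun ω => mul_star_self_nonneg _)
  have hTnorm : ‖∫ ω, (m ω • inn f (X ω)) * star (m ω • inn f (X ω)) ∂μ‖
      ≤ (K*K) * ‖∫ ω, inn f (X ω) * inn (X ω) f ∂μ‖ := by
    have := CStarAlgebra.norm_le_norm_of_nonneg_of_le hTnn hTle
    rwa [norm_smul, Real.norm_eq_abs, abs_of_nonneg (by positivity)] at this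
  -- combine
  have hI0 : (0:ℝ) ≤ ‖∫ ω, inn f (X ω) * inn (X ω) f ∂μ‖ := norm_nonneg _
  have hcle : ‖inn (M f) (M f)‖ ≤ K * K * D₂ * ‖∫ ω, inn f (X ω) * inn (X ω) f ∂μ‖ := by
    by_cases hc0 : ‖inn (M f) (M f)‖ = 0
    · rw [hc0]; positivity
    · have hcpos : 0 < ‖inn (M f) (M f)‖ := lt_of_le_of_ne (norm_nonneg _) (Ne.symm hc0)
      have hmm := hCS.trans (mul_le_mul hTnorm hSnorm (norm_nonneg _) (by positivity))
      nlinarith [hmm, hcpos]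
  rw [hnorm (M f)]
  calc Real.sqrt ‖inn (M f) (M f)‖
      ≤ Real.sqrt (K * K * D₂ * ‖∫ ω, inn f (X ω) * inn (X ω) f ∂μ‖) :=
        Real.sqrt_le_sqrt hcle
    _ = K * Real.sqrt D₂ * Real.sqrt ‖∫ ω, inn f (X ω) * inn (X ω) f ∂μ‖ := by
        rw [show K * K * D₂ * ‖∫ ω, inn f (X ω) * inn (X ω) f ∂μ‖
            = (K * Real.sqrt D₂ * Real.sqrt ‖∫ ω, inn f (X ω) * inn (X ω) f ∂μ‖)^2 by
          rw [mul_pow, mul_pow, Real.sq_sqrt hD₂.le, Real.sq_sqrt hI0]; ring,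
          Real.sqrt_sq (by positivity)]
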